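/- Fix reals α, β, λ, μ > 0 and set κ = λ+α+β. For the four-state Markov-machine chain (defined in the context, corresponding to the case β = γ), let π be a probability vector satisfying the balance equations πQ = 0. Then the expected freshness satisfies E[Δ] := π_{(0,0)} + π_{(1,1)} = (κμ² + (κ²−2αβ)μ + λακ) / (κμ² + (κ²+βλ)μ + λ(α+β)κ). -/
import Mathlib


/-- The generator matrix of the four-state Markov-machine chain (case β = γ), with states
indexed 0=(0,0), 1=(1,0), 2=(0,1), 3=(1,1). -/
noncomputable def mmGen4 (α β lam μ : ℝ) : Matrix (Fin 4) (Fin 4) ℝ :=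
  !![-(α + lam), α,              0,        lam;
     β,          -(β + μ + lam), 0,        μ + lam;
     μ,          0,              -(α + μ), α;
     0,          0,              β,        -β]

/-- For the four-state Markov-machine chain with stationary distribution π,
the expected freshness E[Δ] = π_{(0,0)} + π_{(1,1)} has the stated closed form. -/
theorem freshness_closed_form_four_state
    (α β lam μ : ℝ) (hα : 0 < α) (hβ : 0 < β) (hlam : 0 < lam) (hμ : 0 < μ)
    (κ : ℝ) (hκ : κ = lam + α + β)
    (π : Fin 4 → ℝ) (hπnn : ∀ s, 0 ≤ π s) (hπsum : ∑ s, π s = 1)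
    (hbal : ∀ j, ∑ i, π i * mmGen4 α β lam μ i j = 0) :
    π 0 + π 3
      = (κ * μ ^ 2 + (κ ^ 2 - 2 * α * β) * μ + lam * α * κ) /
        (κ * μ ^ 2 + (κ ^ 2 + β * lam) * μ + lam * (α + β) * κ) := by
  subst hκ
  have e0 := hbal 0
  have e1 := hbal 1
  have e2 := hbal 2
  simp [mmGen4, Fin.sum_univ_four, Matrix.cons_val_zero, Matrix.cons_val_one, Matrix.vecHead, Matrix.vecTail] at e0 e1 e2
  rw [Fin.sum_univ_four] at hπsum
  set κ := lam + α + β with hκ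
  have hD : κ * μ ^ 2 + (κ ^ 2 + β * lam) * μ + lam * (α + β) * κ ≠ 0 := by
    have : 0 < κ := by positivity
    positivity
  rw [eq_div_iff hD]
  set N := κ * μ ^ 2 + (κ ^ 2 - 2 * α * β) * μ + lam * α * κ with hN
  linear_combination (α * (α + μ) - β * (β + μ + lam)) * e0
    - (β * (β - μ) - (α + μ) * (lam + α)) * e1
    + (α * μ + (α + lam) * (μ + lam) + β * lam) * e2 + N * hπsum
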